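/- Let $C_n$ be the cycle on $n$ vertices and $S$ a cut set of $C_n$ with corresponding minimal prime $P_S$ of $J_{C_n}$. Define $f_S=\prod_{s\in S}f_{s_is_j}\prod_{v\in D_S}x_v$, where $\{s_i,s_j\}=N_{C_n}(s)$ and $D_S$ is the set of vertices of degree $2$ in $C_n\setminus S$. Then $(J_{C_n}:f_S)=P_S$. -/

import Mathlib

open MvPolynomial

set_option synthInstance.maxHeartbeats 1000000

namespace Paper

noncomputable section

variable (K : Type) [Field K]

/-- The v-number of a graded ideal `I`: the least `d` such that there is a homogeneous
polynomial `f` of degree `d` with `(I : f)` an associated prime of `R/I`. -/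
def vNumber {σ : Type} (I : Ideal (MvPolynomial σ K)) : ℕ :=
  sInf {d : ℕ | ∃ f : MvPolynomial σ K, f.IsHomogeneous d ∧
    IsAssociatedPrime (Submodule.colon I (Ideal.span {f})) (MvPolynomial σ K ⧸ I)}

/-- The local v-number of `I` at a prime `P`. -/
def vLocal {σ : Type} (I P : Ideal (MvPolynomial σ K)) : ℕ :=
  sInf {d : ℕ | ∃ f : MvPolynomial σ K, f.IsHomogeneous d ∧
    Submodule.colon I (Ideal.span {f}) = P}

/-- The edge binomial `f_{ij} = x_i y_j - x_j y_i`. -/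
def bedge {V : Type} (i j : V) : MvPolynomial (V ⊕ V) K :=
  X (Sum.inl i) * X (Sum.inr j) - X (Sum.inl j) * X (Sum.inr i)

/-- The binomial edge ideal of a graph `G`. -/
def beIdeal {V : Type} (G : SimpleGraph V) : Ideal (MvPolynomial (V ⊕ V) K) :=
  Ideal.span {p | ∃ i j : V, G.Adj i j ∧ p = bedge K i j}

/-- The (monomial) edge ideal of a graph `G`. -/
def edgeIdealM {V : Type} (G : SimpleGraph V) : Ideal (MvPolynomial V K) :=
  Ideal.span {p | ∃ i j : V, G.Adj i j ∧ p = X i * X j}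

/-- `i` and `j` are connected by a walk in `G` avoiding the set `S`. -/
def ReachAvoid {V : Type} (G : SimpleGraph V) (S : Set V) (i j : V) : Prop :=
  ∃ w : G.Walk i j, ∀ v ∈ w.support, v ∉ S

/-- The disjoint union of complete graphs on the connected components of `G ∖ S`. -/
def tildeG {V : Type} (G : SimpleGraph V) (S : Set V) : SimpleGraph V where
  Adj i j := i ≠ j ∧ ReachAvoid G S i j
  symm := ⟨by
    rintro i j ⟨hne, w, hw⟩
    exact ⟨hne.symm, w.reverse, by
      intro v hv
      exact hw v (by simpa [SimpleGraph.Walk.support_reverse] using hv)⟩⟩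
  loopless := ⟨fun i h => h.1 rfl⟩

/-- The minimal prime `P_S` of the binomial edge ideal corresponding to a cut set `S`. -/
def PSIdeal {V : Type} (G : SimpleGraph V) (S : Set V) : Ideal (MvPolynomial (V ⊕ V) K) :=
  Ideal.span ((fun i => (X (Sum.inl i) : MvPolynomial (V ⊕ V) K)) '' S ∪
      (fun i => (X (Sum.inr i) : MvPolynomial (V ⊕ V) K)) '' S)
    ⊔ beIdeal K (tildeG G S)

/-- Number of connected components of the induced subgraph on the complement of `S`. -/
def numComp {V : Type} (G : SimpleGraph V) (S : Set V) : ℕ :=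
  Nat.card ((G.induce Sᶜ).ConnectedComponent)

/-- `S` is a cut set of `G`. -/
def IsCutSet {V : Type} (G : SimpleGraph V) (S : Set V) : Prop :=
  ∀ s ∈ S, numComp G (S \ {s}) < numComp G S

/-- `v` is a cut vertex of `G`. -/
def IsCutVertex {V : Type} (G : SimpleGraph V) (v : V) : Prop :=
  numComp G (∅ : Set V) < numComp G {v}

/-- `G` is a cone graph: some vertex is adjacent to all others. -/
def IsConeGraph {V : Type} (G : SimpleGraph V) : Prop :=
  ∃ v : V, ∀ u : V, u ≠ v → G.Adj v u

/-- `G` (with its labelling by `Fin n`) is a closed graph. -/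
def IsClosedGraph {n : ℕ} (G : SimpleGraph (Fin n)) : Prop :=
  ∀ i j k : Fin n, i < j → j < k → G.Adj i k → G.Adj i j ∧ G.Adj j k

/-- `R/I` is Cohen-Macaulay: there is a regular sequence (inside the irrelevant
maximal ideal) on `R/I` whose length is the Krull dimension of `R/I`. -/
def IsCMQuot {σ : Type} (I : Ideal (MvPolynomial σ K)) : Prop :=
  ∃ rs : List (MvPolynomial σ K),
    (∀ f ∈ rs, f ∈ Ideal.span (Set.range (X : σ → MvPolynomial σ K))) ∧
    RingTheory.Sequence.IsRegular (MvPolynomial σ K ⧸ I)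
      (rs.map (Ideal.Quotient.mk I)) ∧
    ((rs.length : ℕ) : WithBot (WithTop ℕ)) = ringKrullDim (MvPolynomial σ K ⧸ I)

section Regularity

variable {σ : Type} [Fintype σ] [DecidableEq σ]

/-- An arbitrary linear order on a finite type. -/
def fintypeLO (σ : Type) [Fintype σ] [DecidableEq σ] : LinearOrder σ :=
  LinearOrder.lift' (Fintype.equivFin σ) (Fintype.equivFin σ).injective

/-- Term of homological degree `i` of the Koszul complex of `R/I` with respect to all the
variables; its homology computes `Tor_i(R/I, K)`. -/
abbrev KC (I : Ideal (MvPolynomial σ K)) (i : ℕ) : Type :=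
  {T : Finset σ // T.card = i} → MvPolynomial σ K ⧸ I

/-- The Koszul differential. -/
def koszD (I : Ideal (MvPolynomial σ K)) (i : ℕ) (f : KC K I (i + 1)) : KC K I i :=
  letI LO := fintypeLO σ
  letI : (p : Prop) → Decidable p := Classical.propDecidable
  fun T => ∑ t ∈ (Finset.univ \ T.1).attach,
    ((-1 : MvPolynomial σ K ⧸ I) ^ ((T.1.filter (fun a => LO.lt a t.1)).card)) *
      (Ideal.Quotient.mk I (X t.1) *
        f ⟨insert t.1 T.1, by
          rw [Finset.card_insert_of_notMem (Finset.mem_sdiff.mp t.2).2, T.2]⟩)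

/-- Being a cycle in the Koszul complex. -/
def isCycle (I : Ideal (MvPolynomial σ K)) : (i : ℕ) → KC K I i → Prop
  | 0, _ => True
  | (i + 1), f => koszD K I i f = 0

/-- Nonvanishing of the graded Betti number `β_{i,j}(R/I)`: the `i`-th Koszul homology has a
nonzero class of internal degree `j`. -/
def bettiNe (I : Ideal (MvPolynomial σ K)) (i j : ℕ) : Prop :=
  ∃ f : KC K I i,
    (∀ T, ∃ p : MvPolynomial σ K, p.IsHomogeneous (j - i) ∧ Ideal.Quotient.mk I p = f T) ∧
    isCycle K I i f ∧ ¬ ∃ g : KC K I (i + 1), koszD K I i g = f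

/-- The Castelnuovo-Mumford regularity of `R/I`, as `max { j - i : β_{i,j}(R/I) ≠ 0 }`. -/
def reg (I : Ideal (MvPolynomial σ K)) : ℕ :=
  sSup {r : ℕ | ∃ i j : ℕ, j = i + r ∧ bettiNe K I i j}

end Regularity

end

end Paper

namespace Paper

noncomputable section

variable (K : Type) [Field K]

/-! ### Part 1 : algebraic lemmas about `bedge` -/

lemma bedge_self {V : Type} (i : V) : bedge K i i = 0 := by
  simp [bedge]

lemma bedge_comm {V : Type} (i j : V) : bedge K i j = - bedge K j i := by
  simp only [bedge]; ring

lemma bedge_swap_x {V : Type} (a b c : V) :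
    X (Sum.inl b) * bedge K a c =
      X (Sum.inl a) * bedge K b c + X (Sum.inl c) * bedge K a b := by
  simp only [bedge]; ring

lemma bedge_swap_y {V : Type} (a b c : V) :
    X (Sum.inr b) * bedge K a c =
      X (Sum.inr c) * bedge K a b + X (Sum.inr a) * bedge K b c := by
  simp only [bedge]; ring

lemma bedge_mem {V : Type} {G : SimpleGraph V} {i j : V} (h : G.Adj i j) :
    bedge K i j ∈ beIdeal K G :=
  Ideal.subset_span ⟨i, j, h, rfl⟩

/-- Part 3 : the walk lemma. -/
lemma walk_prod_bedge_mem {V : Type} {G : SimpleGraph V} :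
    ∀ {i j : V} (w : G.Walk i j),
      (w.support.tail.dropLast.map (fun v => (X (Sum.inl v) : MvPolynomial (V ⊕ V) K))).prod *
        bedge K i j ∈ beIdeal K G := by
  intro i j w
  induction w with
  | nil => simp [bedge_self]
  | @cons a b j h w ih =>
    cases w with
    | nil =>
      simp only [SimpleGraph.Walk.support_cons, SimpleGraph.Walk.support_nil, List.tail_cons,
        List.dropLast_singleton, List.map_nil, List.prod_nil, one_mul]
      exact bedge_mem K h
    | @cons b c j h2 w2 =>
      have hsup : (SimpleGraph.Walk.cons h (SimpleGraph.Walk.cons h2 w2)).support.tail.dropLast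
          = b :: (SimpleGraph.Walk.cons h2 w2).support.tail.dropLast := by
        simp only [SimpleGraph.Walk.support_cons, List.tail_cons]
        rw [List.dropLast_cons_of_ne_nil (SimpleGraph.Walk.support_ne_nil _)]
      rw [hsup]
      simp only [List.map_cons, List.prod_cons]
      have key : ((SimpleGraph.Walk.cons h2 w2).support.tail.dropLast.map
            (fun v => (X (Sum.inl v) : MvPolynomial (V ⊕ V) K))).prod *
            (X (Sum.inl b) * bedge K a j) ∈ beIdeal K G := by
        rw [bedge_swap_x K a b j]
        rw [mul_add]
        refine add_mem ?_ ?_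
        · rw [show ((SimpleGraph.Walk.cons h2 w2).support.tail.dropLast.map
              (fun v => (X (Sum.inl v) : MvPolynomial (V ⊕ V) K))).prod *
              (X (Sum.inl a) * bedge K b j) = X (Sum.inl a) *
              (((SimpleGraph.Walk.cons h2 w2).support.tail.dropLast.map
              (fun v => (X (Sum.inl v) : MvPolynomial (V ⊕ V) K))).prod * bedge K b j) by ring]
          exact Ideal.mul_mem_left _ _ ih
        · exact Ideal.mul_mem_left _ _ (Ideal.mul_mem_left _ _ (bedge_mem K h))
      rw [show X (Sum.inl b) * ((SimpleGraph.Walk.cons h2 w2).support.tail.dropLast.map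
            (fun v => (X (Sum.inl v) : MvPolynomial (V ⊕ V) K))).prod * bedge K a j
          = ((SimpleGraph.Walk.cons h2 w2).support.tail.dropLast.map
            (fun v => (X (Sum.inl v) : MvPolynomial (V ⊕ V) K))).prod *
            (X (Sum.inl b) * bedge K a j) by ring]
      exact key

/-! ### Part 2 : cycle facts -/

lemma two_le_of_ne {n : ℕ} {a b : Fin n} (h : a ≠ b) : 2 ≤ n := by
  have ha := a.isLt
  have hb := b.isLt
  by_contra hn
  exact h (Fin.ext (by omega))

lemma fin_val_one {n : ℕ} [NeZero n] (h2 : 2 ≤ n) : (1 : Fin n).val = 1 := by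
  rcases n with _ | _ | n
  · omega
  · omega
  · simp [Fin.val_one]

lemma cycle_adj_classify {n : ℕ} [NeZero n] {v u : Fin n}
    (h : (SimpleGraph.cycleGraph n).Adj v u) : u = v - 1 ∨ u = v + 1 := by
  rw [SimpleGraph.cycleGraph_adj'] at h
  have hone : (1 : Fin n).val = 1 := by
    apply fin_val_one
    rcases h with h | h
    · have := (v - u).isLt; omega
    · have := (u - v).isLt; omega
  rcases h with h | h
  · left
    have h1 : v - u = 1 := Fin.ext (by rw [hone]; exact h)
    have h2 := sub_eq_iff_eq_add.mp h1
    rw [h2]; abel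
  · right
    have h1 : u - v = 1 := Fin.ext (by rw [hone]; exact h)
    have h2 := sub_eq_iff_eq_add.mp h1
    rw [h2]; abel

lemma cycle_adj_succ {n : ℕ} [NeZero n] (h2 : 2 ≤ n) (v : Fin n) :
    (SimpleGraph.cycleGraph n).Adj v (v + 1) := by
  rw [SimpleGraph.cycleGraph_adj']
  right
  rw [show v + 1 - v = 1 by abel]
  exact fin_val_one h2

lemma cycle_adj_pred {n : ℕ} [NeZero n] (h2 : 2 ≤ n) (v : Fin n) :
    (SimpleGraph.cycleGraph n).Adj (v - 1) v := by
  rw [SimpleGraph.cycleGraph_adj']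
  right
  rw [show v - (v - 1) = 1 by abel]
  exact fin_val_one h2

/-! ### walk transfer between `G` and induced subgraphs -/

lemma reachable_induce_of_walk {V : Type} {G : SimpleGraph V} {A : Set V} :
    ∀ {u v : V} (w : G.Walk u v), (∀ x ∈ w.support, x ∈ A) →
      ∀ (hu : u ∈ A) (hv : v ∈ A), (G.induce A).Reachable ⟨u, hu⟩ ⟨v, hv⟩ := by
  intro u v w
  induction w with
  | nil => intro _ hu hv; rfl
  | @cons u b v h w ih =>
    intro hw hu hv
    have hb : b ∈ A := hw b (by simp)
    have hadj : (G.induce A).Adj ⟨u, hu⟩ ⟨b, hb⟩ := by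
      simp only [SimpleGraph.comap_adj, Function.Embedding.coe_subtype]
      exact h
    exact hadj.reachable.trans
      (ih (fun x hx => hw x (by rw [SimpleGraph.Walk.support_cons]; exact List.mem_cons_of_mem _ hx)) hb hv)

lemma walk_of_induce {V : Type} {G : SimpleGraph V} {A : Set V} :
    ∀ {x y : A} (_ : (G.induce A).Walk x y),
      ∃ w' : G.Walk x.val y.val, ∀ z ∈ w'.support, z ∈ A := by
  intro x y w
  induction w with
  | nil => exact ⟨SimpleGraph.Walk.nil, by intro z hz; simp at hz; rw [hz]; exact Subtype.coe_prop _⟩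
  | @cons x b y h w ih =>
    obtain ⟨w', hw'⟩ := ih
    have hadj : G.Adj x.val b.val := by
      simpa only [SimpleGraph.comap_adj, Function.Embedding.coe_subtype] using h
    refine ⟨SimpleGraph.Walk.cons hadj w', ?_⟩
    intro z hz
    rw [SimpleGraph.Walk.support_cons] at hz
    rcases List.mem_cons.mp hz with hz | hz
    · rw [hz]; exact x.2
    · exact hw' z hz

/-! ### the surgery lemma -/

lemma surgery {V : Type} {G : SimpleGraph V} {A : Set V} {s : V}
    (hnb : ∀ u v, u ∈ A → v ∈ A → G.Adj s u → G.Adj s v →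
      ∃ w : G.Walk u v, ∀ x ∈ w.support, x ∈ A) :
    ∀ (N : ℕ) {u v : V} (w : G.Walk u v), w.length = N →
      (∀ x ∈ w.support, x ∈ A ∪ {s}) → u ∈ A → v ∈ A →
      ∃ w' : G.Walk u v, ∀ x ∈ w'.support, x ∈ A := by
  intro N
  induction N using Nat.strong_induction_on with
  | _ N ih =>
    intro u v w hlen hw hu hv
    cases w with
    | nil => exact ⟨SimpleGraph.Walk.nil, by intro x hx; simp at hx; rw [hx]; exact hu⟩
    | @cons u b v h w2 =>
      by_cases hb : b ∈ A
      · have hlen2 : w2.length < N := by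
          rw [← hlen, SimpleGraph.Walk.length_cons]; omega
        obtain ⟨w', hw'⟩ := ih w2.length hlen2 w2 rfl
          (fun x hx => hw x (by rw [SimpleGraph.Walk.support_cons]; exact List.mem_cons_of_mem _ hx)) hb hv
        refine ⟨SimpleGraph.Walk.cons h w', ?_⟩
        intro x hx
        rw [SimpleGraph.Walk.support_cons] at hx
        rcases List.mem_cons.mp hx with hx | hx
        · rw [hx]; exact hu
        · exact hw' x hx
      · have hbmem : b ∈ (SimpleGraph.Walk.cons h w2).support := by
          rw [SimpleGraph.Walk.support_cons]
          exact List.mem_cons_of_mem _ w2.start_mem_support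
        have hbs : b = s := by
          rcases hw b hbmem with h' | h'
          · exact absurd h' hb
          · exact Set.eq_of_mem_singleton h'
        subst hbs
        cases w2 with
        | nil => exact absurd hv hb
        | @cons s c v h2 w3 =>
          have hcmem : c ∈ (SimpleGraph.Walk.cons h (SimpleGraph.Walk.cons h2 w3)).support := by
            rw [SimpleGraph.Walk.support_cons]
            refine List.mem_cons_of_mem _ ?_
            rw [SimpleGraph.Walk.support_cons]
            exact List.mem_cons_of_mem _ w3.start_mem_support
          have hc : c ∈ A := by
            have hcs : c ≠ b := fun hh => G.irrefl (hh ▸ h2)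
            rcases hw c hcmem with h' | h'
            · exact h'
            · exact absurd (Set.eq_of_mem_singleton h') hcs
          obtain ⟨wb, hwb⟩ := hnb u c hu hc h.symm h2
          have hlen3 : w3.length < N := by
            rw [← hlen, SimpleGraph.Walk.length_cons, SimpleGraph.Walk.length_cons]; omega
          obtain ⟨wc, hwc⟩ := ih w3.length hlen3 w3 rfl
            (fun x hx => hw x (by
              rw [SimpleGraph.Walk.support_cons]
              exact List.mem_cons_of_mem _ (by
                rw [SimpleGraph.Walk.support_cons]
                exact List.mem_cons_of_mem _ hx))) hc hv
          refine ⟨wb.append wc, ?_⟩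
          intro x hx
          rcases (SimpleGraph.Walk.mem_support_append_iff _ _).mp hx with hx | hx
          · exact hwb x hx
          · exact hwc x hx

/-! ### component counting -/

lemma card_comp_le {V : Type} [Finite V] {G : SimpleGraph V} {A : Set V} {s : V}
    (hnb : ∀ u v, u ∈ A → v ∈ A → G.Adj s u → G.Adj s v →
      ∃ w : G.Walk u v, ∀ x ∈ w.support, x ∈ A) :
    Nat.card (G.induce A).ConnectedComponent ≤
      Nat.card (G.induce (A ∪ {s})).ConnectedComponent := by
  classical
  have hle : A ≤ A ∪ {s} := Set.subset_union_left
  apply Nat.card_le_card_of_injective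
    (SimpleGraph.ConnectedComponent.map (G.induceHomOfLE hle).toHom)
  intro c d
  refine SimpleGraph.ConnectedComponent.ind₂ (fun x y hxy => ?_) c d
  rw [SimpleGraph.ConnectedComponent.map_mk, SimpleGraph.ConnectedComponent.map_mk,
    SimpleGraph.ConnectedComponent.eq] at hxy
  obtain ⟨w⟩ := hxy
  obtain ⟨w', hw'⟩ := walk_of_induce w
  obtain ⟨w'', hw''⟩ := surgery hnb w'.length w' rfl hw' x.2 y.2
  exact SimpleGraph.ConnectedComponent.eq.mpr (reachable_induce_of_walk w'' hw'' x.2 y.2)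

/-- The master lemma extracted from the cut-set property. -/
lemma cut_master {n : ℕ} {S : Finset (Fin n)}
    (hcut : IsCutSet (SimpleGraph.cycleGraph n) (↑S : Set (Fin n)))
    {s : Fin n} (hs : s ∈ S)
    (hnb : ∀ u v : Fin n, u ∉ S → v ∉ S → (SimpleGraph.cycleGraph n).Adj s u →
      (SimpleGraph.cycleGraph n).Adj s v →
      ∃ w : (SimpleGraph.cycleGraph n).Walk u v, ∀ x ∈ w.support, x ∉ S) : False := by
  have hset : ((↑S : Set (Fin n)) \ {s})ᶜ = (↑S : Set (Fin n))ᶜ ∪ {s} := by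
    ext x; simp only [Set.mem_compl_iff, Set.mem_diff, Set.mem_union, Set.mem_singleton_iff]
    by_cases hx : x = s <;> simp [hx, hs]
  have hnb' : ∀ u v : Fin n, u ∈ (↑S : Set (Fin n))ᶜ → v ∈ (↑S : Set (Fin n))ᶜ →
      (SimpleGraph.cycleGraph n).Adj s u → (SimpleGraph.cycleGraph n).Adj s v →
      ∃ w : (SimpleGraph.cycleGraph n).Walk u v, ∀ x ∈ w.support, x ∈ (↑S : Set (Fin n))ᶜ := by
    intro u v hu hv hau hav
    obtain ⟨w, hw⟩ := hnb u v (by simpa using hu) (by simpa using hv) hau hav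
    exact ⟨w, fun x hx => by simpa using hw x hx⟩
  have hle := card_comp_le hnb'
  have hlt := hcut s (by exact_mod_cast hs)
  rw [numComp, numComp, hset] at hlt
  omega

lemma cut_indep {n : ℕ} [NeZero n] {S : Finset (Fin n)}
    (hcut : IsCutSet (SimpleGraph.cycleGraph n) (↑S : Set (Fin n)))
    {s : Fin n} (hs : s ∈ S) : (s + 1) ∉ S ∧ (s - 1) ∉ S := by
  constructor
  · intro h1
    apply cut_master hcut hs
    intro u v hu hv hau hav
    have hu' : u = s - 1 := by
      rcases cycle_adj_classify hau with h | h
      · exact h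
      · exact absurd (h ▸ h1) hu
    have hv' : v = s - 1 := by
      rcases cycle_adj_classify hav with h | h
      · exact h
      · exact absurd (h ▸ h1) hv
    subst hu'; subst hv'
    exact ⟨SimpleGraph.Walk.nil, by intro x hx; simp at hx; rw [hx]; exact hu⟩
  · intro h1
    apply cut_master hcut hs
    intro u v hu hv hau hav
    have hu' : u = s + 1 := by
      rcases cycle_adj_classify hau with h | h
      · exact absurd (h ▸ h1) hu
      · exact h
    have hv' : v = s + 1 := by
      rcases cycle_adj_classify hav with h | h
      · exact absurd (h ▸ h1) hv
      · exact h
    subst hu'; subst hv'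
    exact ⟨SimpleGraph.Walk.nil, by intro x hx; simp at hx; rw [hx]; exact hu⟩

lemma cut_not_rel {n : ℕ} [NeZero n] {S : Finset (Fin n)}
    (hcut : IsCutSet (SimpleGraph.cycleGraph n) (↑S : Set (Fin n)))
    {s : Fin n} (hs : s ∈ S) :
    ¬ (s - 1 = s + 1 ∨ ReachAvoid (SimpleGraph.cycleGraph n) (↑S : Set (Fin n)) (s - 1) (s + 1)) := by
  intro hrel
  apply cut_master hcut hs
  intro u v hu hv hau hav
  have hu' := cycle_adj_classify hau
  have hv' := cycle_adj_classify hav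
  rcases hrel with heq | ⟨w, hw⟩
  · have hu2 : u = s - 1 := by rcases hu' with h | h; exacts [h, by rw [h, ← heq]]
    have hv2 : v = s - 1 := by rcases hv' with h | h; exacts [h, by rw [h, ← heq]]
    subst hu2; subst hv2
    exact ⟨SimpleGraph.Walk.nil, by intro x hx; simp at hx; rw [hx]; exact hu⟩
  · have hw' : ∀ x ∈ w.support, x ∉ S := fun x hx => by simpa using hw x hx
    rcases hu' with hu2 | hu2 <;> rcases hv' with hv2 | hv2 <;> subst hu2 <;> subst hv2
    · exact ⟨SimpleGraph.Walk.nil, by intro x hx; simp at hx; rw [hx]; exact hu⟩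
    · exact ⟨w, hw'⟩
    · exact ⟨w.reverse, fun x hx => hw' x (by
        rw [SimpleGraph.Walk.support_reverse] at hx; exact List.mem_reverse.mp hx)⟩
    · exact ⟨SimpleGraph.Walk.nil, by intro x hx; simp at hx; rw [hx]; exact hu⟩

/-! ### Part 6 : the classifying homomorphism -/

/-- The setoid of connected components of `G ∖ S` (with `S`-vertices as singletons). -/
def cSetoid {V : Type} (G : SimpleGraph V) (S : Set V) : Setoid V where
  r i j := i = j ∨ ReachAvoid G S i j
  iseqv := by
    constructor
    · intro i; exact Or.inl rfl
    · rintro i j (rfl | ⟨w, hw⟩)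
      · exact Or.inl rfl
      · exact Or.inr ⟨w.reverse, fun v hv => hw v (by
          rw [SimpleGraph.Walk.support_reverse] at hv; exact List.mem_reverse.mp hv)⟩
    · rintro i j k (rfl | ⟨w, hw⟩) h2
      · exact h2
      · rcases h2 with rfl | ⟨w2, hw2⟩
        · exact Or.inr ⟨w, hw⟩
        · refine Or.inr ⟨w.append w2, fun v hv => ?_⟩
          rcases (SimpleGraph.Walk.mem_support_append_iff _ _).mp hv with hv | hv
          exacts [hw v hv, hw2 v hv]

variable {V : Type}

/-- Target variables for the classifying homomorphism. -/
abbrev QVar {V : Type} (G : SimpleGraph V) (S : Set V) : Type :=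
  Quotient (cSetoid G S) ⊕ (Quotient (cSetoid G S) ⊕ V)

open Classical in
/-- Images of the variables under the classifying homomorphism. -/
noncomputable def gmap (G : SimpleGraph V) (S : Set V) : V ⊕ V → MvPolynomial (QVar G S) K :=
  Sum.elim
    (fun i => if i ∈ S then 0 else
      X (Sum.inl (Quotient.mk (cSetoid G S) i)) * X (Sum.inr (Sum.inr i)))
    (fun i => if i ∈ S then 0 else
      X (Sum.inr (Sum.inl (Quotient.mk (cSetoid G S) i))) * X (Sum.inr (Sum.inr i)))

/-- The classifying homomorphism. -/
noncomputable def phi (G : SimpleGraph V) (S : Set V) :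
    MvPolynomial (V ⊕ V) K →ₐ[K] MvPolynomial (QVar G S) K :=
  aeval (gmap K G S)

/-- Exponent vectors of the variable images. -/
noncomputable def eps (G : SimpleGraph V) (S : Set V) : V ⊕ V → (QVar G S →₀ ℕ) :=
  Sum.elim
    (fun i => Finsupp.single (Sum.inl (Quotient.mk (cSetoid G S) i)) 1 +
      Finsupp.single (Sum.inr (Sum.inr i)) 1)
    (fun i => Finsupp.single (Sum.inr (Sum.inl (Quotient.mk (cSetoid G S) i))) 1 +
      Finsupp.single (Sum.inr (Sum.inr i)) 1)

/-- The map on exponents induced by `phi`. -/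
noncomputable def nu (G : SimpleGraph V) (S : Set V) (μ : (V ⊕ V) →₀ ℕ) : QVar G S →₀ ℕ :=
  μ.sum fun v e => e • eps G S v

lemma reachAvoid_not_mem_left {G : SimpleGraph V} {S : Set V} {i j : V}
    (h : ReachAvoid G S i j) : i ∉ S := by
  obtain ⟨w, hw⟩ := h
  exact hw i w.start_mem_support

lemma reachAvoid_not_mem_right {G : SimpleGraph V} {S : Set V} {i j : V}
    (h : ReachAvoid G S i j) : j ∉ S := by
  obtain ⟨w, hw⟩ := h
  exact hw j w.end_mem_support

lemma PS_le_ker {G : SimpleGraph V} {S : Set V} :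
    PSIdeal K G S ≤ RingHom.ker (phi K G S).toRingHom := by
  rw [PSIdeal]
  apply sup_le
  · rw [Ideal.span_le]
    rintro p (⟨i, hi, rfl⟩ | ⟨i, hi, rfl⟩) <;>
      simp [RingHom.mem_ker, phi, gmap, hi]
  · rw [beIdeal, Ideal.span_le]
    rintro p ⟨i, j, ⟨hne, hreach⟩, rfl⟩
    have hi : i ∉ S := reachAvoid_not_mem_left hreach
    have hj : j ∉ S := reachAvoid_not_mem_right hreach
    have hq : Quotient.mk (cSetoid G S) i = Quotient.mk (cSetoid G S) j :=
      Quotient.sound (Or.inr hreach)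
    have hz : phi K G S (bedge K i j) = 0 := by
      simp only [bedge, map_sub, map_mul, phi, aeval_X, gmap, Sum.elim_inl, Sum.elim_inr,
        if_neg hi, if_neg hj, hq]
      ring
    exact RingHom.mem_ker.mpr hz

lemma gmap_eq_monomial_inl {G : SimpleGraph V} {S : Set V} {i : V} (h : i ∉ S) :
    gmap K G S (Sum.inl i) = monomial (eps G S (Sum.inl i)) (1 : K) := by
  simp only [gmap, eps, Sum.elim_inl, if_neg h, X, monomial_mul, one_mul]

lemma gmap_eq_monomial_inr {G : SimpleGraph V} {S : Set V} {i : V} (h : i ∉ S) :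
    gmap K G S (Sum.inr i) = monomial (eps G S (Sum.inr i)) (1 : K) := by
  simp only [gmap, eps, Sum.elim_inr, if_neg h, X, monomial_mul, one_mul]

lemma prod_monomial_one {α β : Type} (t : Finset α) (h : α → (β →₀ ℕ)) :
    (∏ a ∈ t, (monomial (h a) (1 : K))) = monomial (∑ a ∈ t, h a) (1 : K) := by
  classical
  induction t using Finset.induction_on with
  | empty => simp [monomial_zero']
  | insert _ _ hnotmem ih =>
    rw [Finset.prod_insert hnotmem, Finset.sum_insert hnotmem, ih, monomial_mul, one_mul]

lemma phi_monomial {G : SimpleGraph V} {S : Set V} (μ : (V ⊕ V) →₀ ℕ) (c : K)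
    (h : ∀ i ∈ S, μ (Sum.inl i) = 0 ∧ μ (Sum.inr i) = 0) :
    phi K G S (monomial μ c) = monomial (nu G S μ) c := by
  rw [phi, aeval_monomial]
  have step : ∀ v ∈ μ.support, gmap K G S v ^ μ v = monomial (μ v • eps G S v) (1 : K) := by
    intro v hv
    have hv0 : μ v ≠ 0 := Finsupp.mem_support_iff.mp hv
    cases v with
    | inl i =>
      have hi : i ∉ S := fun hi => hv0 (h i hi).1
      rw [gmap_eq_monomial_inl K hi, monomial_pow, one_pow]
    | inr i =>
      have hi : i ∉ S := fun hi => hv0 (h i hi).2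
      rw [gmap_eq_monomial_inr K hi, monomial_pow, one_pow]
  rw [Finsupp.prod, Finset.prod_congr rfl step, prod_monomial_one]
  rw [show (algebraMap K (MvPolynomial (QVar G S) K)) c = C c from rfl, C_mul_monomial, mul_one]
  rfl

/-! ### Part 7 : normal form reduction -/

/-- Canonical (sorted) exponent vectors. -/
def Canon (n : ℕ) (S : Finset (Fin n)) : Set ((Fin n ⊕ Fin n) →₀ ℕ) :=
  {μ | (∀ i ∈ S, μ (Sum.inl i) = 0 ∧ μ (Sum.inr i) = 0) ∧
    ∀ i j : Fin n, i < j →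
      Quotient.mk (cSetoid (SimpleGraph.cycleGraph n) (↑S : Set (Fin n))) i =
        Quotient.mk (cSetoid (SimpleGraph.cycleGraph n) (↑S : Set (Fin n))) j →
      μ (Sum.inr i) = 0 ∨ μ (Sum.inl j) = 0}

/-- Polynomials all of whose monomials are canonical. -/
def NFsub (n : ℕ) (S : Finset (Fin n)) : Submodule K (MvPolynomial (Fin n ⊕ Fin n) K) where
  carrier := {p | ∀ μ ∈ p.support, μ ∈ Canon n S}
  zero_mem' := by simp
  add_mem' := by
    intro a b ha hb μ hμ
    rcases Finset.mem_union.mp (MvPolynomial.support_add hμ) with h | h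
    exacts [ha μ h, hb μ h]
  smul_mem' := by
    intro c p hp μ hμ
    exact hp μ (MvPolynomial.support_smul hμ)

lemma X_X_mul_monomial {σ : Type} (a b : σ) (μ : σ →₀ ℕ) (c : K) :
    (X a : MvPolynomial σ K) * X b * monomial μ c =
      monomial (Finsupp.single a 1 + Finsupp.single b 1 + μ) c := by
  rw [show (X a : MvPolynomial σ K) = monomial (Finsupp.single a 1) 1 from rfl,
    show (X b : MvPolynomial σ K) = monomial (Finsupp.single b 1) 1 from rfl,
    monomial_mul, monomial_mul, one_mul, one_mul]

lemma X_mul_monomial {σ : Type} (a : σ) (μ : σ →₀ ℕ) (c : K) :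
    (X a : MvPolynomial σ K) * monomial μ c = monomial (Finsupp.single a 1 + μ) c := by
  rw [show (X a : MvPolynomial σ K) = monomial (Finsupp.single a 1) 1 from rfl,
    monomial_mul, one_mul]

lemma add_sub_single_one {σ : Type} {μ : σ →₀ ℕ} {a : σ} (ha : μ a ≠ 0) :
    Finsupp.single a 1 + (μ - Finsupp.single a 1) = μ := by
  classical
  ext w
  by_cases h : a = w
  · subst h
    simp only [Finsupp.add_apply, Finsupp.tsub_apply, Finsupp.single_apply, if_true]
    omega
  · simp [Finsupp.add_apply, Finsupp.tsub_apply, Finsupp.single_apply, h]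

lemma add_sub_single_pair {σ : Type} {μ : σ →₀ ℕ} {a b : σ} (hab : a ≠ b)
    (ha : μ a ≠ 0) (hb : μ b ≠ 0) :
    Finsupp.single a 1 + Finsupp.single b 1 +
      (μ - Finsupp.single b 1 - Finsupp.single a 1) = μ := by
  classical
  ext w
  by_cases h1 : a = w
  · subst h1
    have hba : ¬ (b = a) := fun h => hab h.symm
    simp only [Finsupp.add_apply, Finsupp.tsub_apply, Finsupp.single_apply, if_neg hba, if_true]
    omega
  · by_cases h2 : b = w
    · subst h2
      simp only [Finsupp.add_apply, Finsupp.tsub_apply, Finsupp.single_apply, if_neg h1, if_true]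
      omega
    · simp [Finsupp.add_apply, Finsupp.tsub_apply, Finsupp.single_apply, h1, h2]

/-- The termination measure for sorting. -/
def meas {n : ℕ} (μ : (Fin n ⊕ Fin n) →₀ ℕ) : ℕ :=
  ∑ k : Fin n, (k : ℕ) * μ (Sum.inl k)

lemma meas_add {n : ℕ} (μ ν : (Fin n ⊕ Fin n) →₀ ℕ) : meas (μ + ν) = meas μ + meas ν := by
  simp [meas, Finsupp.add_apply, mul_add, Finset.sum_add_distrib]

lemma meas_single_inl {n : ℕ} (k : Fin n) :
    meas (Finsupp.single (Sum.inl k : Fin n ⊕ Fin n) 1) = (k : ℕ) := by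
  classical
  rw [meas, Finset.sum_eq_single k]
  · simp
  · intro b _ hb
    have hne : (Sum.inl k : Fin n ⊕ Fin n) ≠ Sum.inl b := by
      simp only [ne_eq, Sum.inl.injEq]; exact fun h => hb (h.symm ▸ rfl)
    simp [Finsupp.single_apply, hne]
  · intro h; exact absurd (Finset.mem_univ k) h

lemma meas_single_inr {n : ℕ} (k : Fin n) :
    meas (Finsupp.single (Sum.inr k : Fin n ⊕ Fin n) 1) = 0 := by
  classical
  rw [meas]
  apply Finset.sum_eq_zero
  intro b _
  have hne : (Sum.inr k : Fin n ⊕ Fin n) ≠ Sum.inl b := by simp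
  simp [Finsupp.single_apply, hne]

lemma monomial_mem_reduction {n : ℕ} (S : Finset (Fin n)) (μ0 : (Fin n ⊕ Fin n) →₀ ℕ) (c0 : K) :
    monomial μ0 c0 ∈
      Submodule.restrictScalars K (PSIdeal K (SimpleGraph.cycleGraph n) (↑S : Set (Fin n))) ⊔
        NFsub K n S := by
  classical
  suffices H : ∀ (N : ℕ) (μ : (Fin n ⊕ Fin n) →₀ ℕ) (c : K), meas μ = N →
      monomial μ c ∈
        Submodule.restrictScalars K (PSIdeal K (SimpleGraph.cycleGraph n) (↑S : Set (Fin n))) ⊔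
          NFsub K n S by exact H _ μ0 c0 rfl
  intro N
  induction N using Nat.strong_induction_on with
  | _ N ih =>
    intro μ c hN
    by_cases hS : ∃ i ∈ S, μ (Sum.inl i) ≠ 0 ∨ μ (Sum.inr i) ≠ 0
    · obtain ⟨i, hi, hcase⟩ := hS
      refine Submodule.mem_sup_left ?_
      rw [Submodule.restrictScalars_mem]
      have hvar : ∀ v : Fin n ⊕ Fin n, (v = Sum.inl i ∨ v = Sum.inr i) → μ v ≠ 0 →
          monomial μ c ∈ PSIdeal K (SimpleGraph.cycleGraph n) (↑S : Set (Fin n)) := by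
        intro v hv h0
        have hfac : monomial μ c = X v * monomial (μ - Finsupp.single v 1) c := by
          rw [X_mul_monomial, add_sub_single_one h0]
        rw [hfac]
        apply Ideal.mul_mem_right
        apply Submodule.mem_sup_left
        apply Ideal.subset_span
        rcases hv with rfl | rfl
        · exact Or.inl ⟨i, by simpa using hi, rfl⟩
        · exact Or.inr ⟨i, by simpa using hi, rfl⟩
      rcases hcase with h0 | h0
      · exact hvar (Sum.inl i) (Or.inl rfl) h0
      · exact hvar (Sum.inr i) (Or.inr rfl) h0
    · push_neg at hS
      have hS' : ∀ i ∈ S, μ (Sum.inl i) = 0 ∧ μ (Sum.inr i) = 0 := by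
        intro i hi
        exact ⟨(hS i hi).1, (hS i hi).2⟩
      by_cases hC : μ ∈ Canon n S
      · refine Submodule.mem_sup_right ?_
        intro μ' hμ'
        rw [MvPolynomial.support_monomial] at hμ'
        split_ifs at hμ'
        · simp at hμ'
        · rw [Finset.mem_singleton.mp hμ']
          exact hC
      · have hfail : ∃ i j : Fin n, i < j ∧
            (Quotient.mk (cSetoid (SimpleGraph.cycleGraph n) (↑S : Set (Fin n))) i =
              Quotient.mk (cSetoid (SimpleGraph.cycleGraph n) (↑S : Set (Fin n))) j) ∧
            μ (Sum.inr i) ≠ 0 ∧ μ (Sum.inl j) ≠ 0 := by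
          by_contra hcon
          push_neg at hcon
          refine hC ⟨hS', fun i j hij hq => ?_⟩
          by_cases h1 : μ (Sum.inr i) = 0
          · exact Or.inl h1
          · exact Or.inr (hcon i j hij hq h1)
        obtain ⟨i, j, hij, hq, hyi, hxj⟩ := hfail
        have hne : i ≠ j := ne_of_lt hij
        set μ1 := μ - Finsupp.single (Sum.inr i) 1 - Finsupp.single (Sum.inl j) 1 with hμ1def
        have hμrec : Finsupp.single (Sum.inl j : Fin n ⊕ Fin n) 1 +
            Finsupp.single (Sum.inr i : Fin n ⊕ Fin n) 1 + μ1 = μ := by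
          rw [hμ1def]
          exact add_sub_single_pair (by simp) hxj hyi
        set μ2 := Finsupp.single (Sum.inl i : Fin n ⊕ Fin n) 1 +
            Finsupp.single (Sum.inr j : Fin n ⊕ Fin n) 1 + μ1 with hμ2def
        have e1 : (X (Sum.inl j) : MvPolynomial (Fin n ⊕ Fin n) K) * X (Sum.inr i) *
            monomial μ1 c = monomial μ c := by
          rw [X_X_mul_monomial, hμrec]
        have e2 : (X (Sum.inl i) : MvPolynomial (Fin n ⊕ Fin n) K) * X (Sum.inr j) *
            monomial μ1 c = monomial μ2 c := by
          rw [X_X_mul_monomial]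
        have hkey : monomial μ c = monomial μ2 c - monomial μ1 c * bedge K i j := by
          rw [bedge, ← e1, ← e2]; ring
        rw [hkey]
        have hmeas2 : meas μ2 < N := by
          have h1 : meas μ = (j : ℕ) + meas μ1 := by
            rw [← hμrec, meas_add, meas_add, meas_single_inl, meas_single_inr]; omega
          have h2 : meas μ2 = (i : ℕ) + meas μ1 := by
            rw [hμ2def, meas_add, meas_add, meas_single_inl, meas_single_inr]; omega
          have : (i : ℕ) < (j : ℕ) := hij
          omega
        refine sub_mem (ih (meas μ2) hmeas2 μ2 c rfl) ?_
        apply Submodule.mem_sup_left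
        rw [Submodule.restrictScalars_mem]
        apply Ideal.mul_mem_left
        refine Submodule.mem_sup_right ?_
        apply bedge_mem
        refine ⟨hne, ?_⟩
        rcases Quotient.exact hq with h | h
        · exact absurd h hne
        · exact h

lemma poly_mem_reduction {n : ℕ} (S : Finset (Fin n)) (p : MvPolynomial (Fin n ⊕ Fin n) K) :
    p ∈ Submodule.restrictScalars K (PSIdeal K (SimpleGraph.cycleGraph n) (↑S : Set (Fin n))) ⊔
      NFsub K n S := by
  rw [MvPolynomial.as_sum p]
  exact Submodule.sum_mem _ (fun μ _ => monomial_mem_reduction K S μ (coeff μ p))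

/-! ### Part 8 : injectivity on canonical monomials -/

section Part8

open scoped Classical

variable {n : ℕ} {S : Finset (Fin n)}

/-- class of a vertex -/
noncomputable abbrev clsv (n : ℕ) (S : Finset (Fin n)) (i : Fin n) :=
  Quotient.mk (cSetoid (SimpleGraph.cycleGraph n) (↑S : Set (Fin n))) i

lemma nu_apply (μ : (Fin n ⊕ Fin n) →₀ ℕ) (w) :
    nu (SimpleGraph.cycleGraph n) (↑S : Set (Fin n)) μ w =
      ∑ v : Fin n ⊕ Fin n, μ v * (eps (SimpleGraph.cycleGraph n) (↑S : Set (Fin n)) v) w := by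
  classical
  rw [nu, Finsupp.sum_apply]
  rw [Finsupp.sum_fintype]
  · apply Finset.sum_congr rfl
    intro v _
    rw [Finsupp.smul_apply, smul_eq_mul]
  · intro v
    simp

lemma eps_inl_z (i k : Fin n) :
    (eps (SimpleGraph.cycleGraph n) (↑S : Set (Fin n)) (Sum.inl i)) (Sum.inr (Sum.inr k)) =
      if i = k then 1 else 0 := by
  classical
  simp only [eps, Sum.elim_inl, Finsupp.add_apply, Finsupp.single_apply]
  by_cases h : i = k <;> simp [h]

lemma eps_inr_z (i k : Fin n) :
    (eps (SimpleGraph.cycleGraph n) (↑S : Set (Fin n)) (Sum.inr i)) (Sum.inr (Sum.inr k)) =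
      if i = k then 1 else 0 := by
  classical
  simp only [eps, Sum.elim_inr, Finsupp.add_apply, Finsupp.single_apply]
  by_cases h : i = k <;> simp [h]

lemma eps_inl_s (i : Fin n) (q) :
    (eps (SimpleGraph.cycleGraph n) (↑S : Set (Fin n)) (Sum.inl i)) (Sum.inl q) =
      if clsv n S i = q then 1 else 0 := by
  classical
  simp only [eps, Sum.elim_inl, Finsupp.add_apply, Finsupp.single_apply]
  by_cases h : clsv n S i = q <;> simp [h, clsv]

lemma eps_inr_s (i : Fin n) (q) :
    (eps (SimpleGraph.cycleGraph n) (↑S : Set (Fin n)) (Sum.inr i)) (Sum.inl q) = 0 := by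
  classical
  simp [eps, Finsupp.single_apply]

lemma nuz (μ : (Fin n ⊕ Fin n) →₀ ℕ) (k : Fin n) :
    nu (SimpleGraph.cycleGraph n) (↑S : Set (Fin n)) μ (Sum.inr (Sum.inr k)) =
      μ (Sum.inl k) + μ (Sum.inr k) := by
  classical
  rw [nu_apply, Fintype.sum_sum_type]
  simp only [eps_inl_z, eps_inr_z, mul_ite, mul_one, mul_zero]
  rw [Finset.sum_ite_eq' Finset.univ k (fun k' => μ (Sum.inl k')),
    Finset.sum_ite_eq' Finset.univ k (fun k' => μ (Sum.inr k'))]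
  simp

lemma nus (μ : (Fin n ⊕ Fin n) →₀ ℕ) (q) :
    nu (SimpleGraph.cycleGraph n) (↑S : Set (Fin n)) μ (Sum.inl q) =
      ∑ k ∈ Finset.univ.filter (fun k => clsv n S k = q), μ (Sum.inl k) := by
  classical
  rw [nu_apply, Fintype.sum_sum_type]
  simp only [eps_inl_s, eps_inr_s, mul_ite, mul_one, mul_zero]
  rw [Finset.sum_filter]
  simp

lemma nu_left_le {μ μ' : (Fin n ⊕ Fin n) →₀ ℕ} (hμ : μ ∈ Canon n S) (hμ' : μ' ∈ Canon n S)
    (h : nu (SimpleGraph.cycleGraph n) (↑S : Set (Fin n)) μ =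
      nu (SimpleGraph.cycleGraph n) (↑S : Set (Fin n)) μ') (i : Fin n)
    (hind : ∀ j, j < i → μ (Sum.inl j) = μ' (Sum.inl j)) :
    μ (Sum.inl i) ≤ μ' (Sum.inl i) := by
  classical
  by_contra hlt
  push_neg at hlt
  have hz : μ (Sum.inl i) + μ (Sum.inr i) = μ' (Sum.inl i) + μ' (Sum.inr i) := by
    have h1 := congr_arg (fun f : (QVar (SimpleGraph.cycleGraph n) (↑S : Set (Fin n))) →₀ ℕ =>
      f (Sum.inr (Sum.inr i))) h
    simpa only [nuz] using h1
  have hyi : μ' (Sum.inr i) ≠ 0 := by omega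
  have hcz : ∀ j, i < j → clsv n S j = clsv n S i → μ' (Sum.inl j) = 0 := by
    intro j hij hc
    rcases hμ'.2 i j hij hc.symm with h0 | h0
    · exact absurd h0 hyi
    · exact h0
  set q := clsv n S i with hqdef
  set F := Finset.univ.filter (fun k => clsv n S k = q) with hFdef
  have hsum : ∑ k ∈ F, μ (Sum.inl k) = ∑ k ∈ F, μ' (Sum.inl k) := by
    have h1 := congr_arg (fun f : (QVar (SimpleGraph.cycleGraph n) (↑S : Set (Fin n))) →₀ ℕ =>
      f (Sum.inl q)) h
    simpa only [nus] using h1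
  have hsplit : ∀ (ν : (Fin n ⊕ Fin n) →₀ ℕ), ∑ k ∈ F, ν (Sum.inl k) =
      ∑ k ∈ F.filter (fun k => k < i), ν (Sum.inl k) +
        ∑ k ∈ F.filter (fun k => ¬ k < i), ν (Sum.inl k) :=
    fun ν => (Finset.sum_filter_add_sum_filter_not F _ _).symm
  have h1 : ∑ k ∈ F.filter (fun k => k < i), μ (Sum.inl k) =
      ∑ k ∈ F.filter (fun k => k < i), μ' (Sum.inl k) :=
    Finset.sum_congr rfl (fun k hk => hind k (Finset.mem_filter.mp hk).2)
  have hiF : i ∈ F.filter (fun k => ¬ k < i) := by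
    refine Finset.mem_filter.mpr ⟨Finset.mem_filter.mpr ⟨Finset.mem_univ i, ?_⟩, lt_irrefl i⟩
    rw [hqdef]
  have h2 : ∑ k ∈ F.filter (fun k => ¬ k < i), μ' (Sum.inl k) = μ' (Sum.inl i) := by
    apply Finset.sum_eq_single_of_mem i hiF
    intro b hb hbne
    have hb1 := Finset.mem_filter.mp hb
    have hb2 := Finset.mem_filter.mp hb1.1
    have : i < b := lt_of_le_of_ne (not_lt.mp hb1.2) (fun hh => hbne hh.symm)
    exact hcz b this hb2.2
  have h3 : μ (Sum.inl i) ≤ ∑ k ∈ F.filter (fun k => ¬ k < i), μ (Sum.inl k) :=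
    Finset.single_le_sum (f := fun k => μ (Sum.inl k)) (fun _ _ => Nat.zero_le _) hiF
  have e1 := hsplit μ
  have e2 := hsplit μ'
  omega

lemma nu_inj {μ μ' : (Fin n ⊕ Fin n) →₀ ℕ} (hμ : μ ∈ Canon n S) (hμ' : μ' ∈ Canon n S)
    (h : nu (SimpleGraph.cycleGraph n) (↑S : Set (Fin n)) μ =
      nu (SimpleGraph.cycleGraph n) (↑S : Set (Fin n)) μ') : μ = μ' := by
  classical
  have hinl : ∀ i : Fin n, μ (Sum.inl i) = μ' (Sum.inl i) := by
    by_contra hcon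
    push_neg at hcon
    obtain ⟨i, hi⟩ := hcon
    set T := Finset.univ.filter (fun k => μ (Sum.inl k) ≠ μ' (Sum.inl k)) with hTdef
    have hTne : T.Nonempty := ⟨i, by simp [hTdef, hi]⟩
    set m := T.min' hTne with hmdef
    have hmT := T.min'_mem hTne
    have hmmin : ∀ j, j < m → μ (Sum.inl j) = μ' (Sum.inl j) := by
      intro j hj
      by_contra hjne
      exact absurd hj (not_lt.mpr (T.min'_le j (by simp [hTdef, hjne])))
    have hle1 := nu_left_le hμ hμ' h m hmmin
    have hle2 := nu_left_le hμ' hμ h.symm m (fun j hj => (hmmin j hj).symm)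
    exact (Finset.mem_filter.mp hmT).2 (le_antisymm hle1 hle2)
  ext w
  cases w with
  | inl i => exact hinl i
  | inr i =>
    have hz : μ (Sum.inl i) + μ (Sum.inr i) = μ' (Sum.inl i) + μ' (Sum.inr i) := by
      have h1 := congr_arg (fun f : (QVar (SimpleGraph.cycleGraph n) (↑S : Set (Fin n))) →₀ ℕ =>
        f (Sum.inr (Sum.inr i))) h
      simpa only [nuz] using h1
    have := hinl i
    omega

lemma NF_phi_inj (m : MvPolynomial (Fin n ⊕ Fin n) K) (hm : m ∈ NFsub K n S)
    (h0 : phi K (SimpleGraph.cycleGraph n) (↑S : Set (Fin n)) m = 0) : m = 0 := by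
  classical
  by_contra hne
  obtain ⟨μ0, hμ0⟩ := (MvPolynomial.support_nonempty.mpr hne)
  have hrep : phi K (SimpleGraph.cycleGraph n) (↑S : Set (Fin n)) m =
      ∑ μ ∈ m.support, monomial (nu (SimpleGraph.cycleGraph n) (↑S : Set (Fin n)) μ)
        (coeff μ m) := by
    conv_lhs => rw [MvPolynomial.as_sum m]
    rw [map_sum]
    exact Finset.sum_congr rfl (fun μ hμ => phi_monomial K μ _ (hm μ hμ).1)
  have hc : coeff (nu (SimpleGraph.cycleGraph n) (↑S : Set (Fin n)) μ0)
      (phi K (SimpleGraph.cycleGraph n) (↑S : Set (Fin n)) m) = coeff μ0 m := by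
    rw [hrep, MvPolynomial.coeff_sum]
    rw [Finset.sum_eq_single_of_mem μ0 hμ0]
    · rw [coeff_monomial, if_pos rfl]
    · intro b hb hbne
      rw [coeff_monomial, if_neg]
      intro heq
      exact hbne (nu_inj (hm b hb) (hm μ0 hμ0) heq)
  rw [h0] at hc
  simp only [coeff_zero] at hc
  exact (MvPolynomial.mem_support_iff.mp hμ0) hc.symm

lemma ker_le_PS (p : MvPolynomial (Fin n ⊕ Fin n) K)
    (h0 : phi K (SimpleGraph.cycleGraph n) (↑S : Set (Fin n)) p = 0) :
    p ∈ PSIdeal K (SimpleGraph.cycleGraph n) (↑S : Set (Fin n)) := by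
  obtain ⟨q, hq, m, hm, rfl⟩ := Submodule.mem_sup.mp (poly_mem_reduction K S p)
  have hq' : q ∈ PSIdeal K (SimpleGraph.cycleGraph n) (↑S : Set (Fin n)) := hq
  have hphiq : phi K (SimpleGraph.cycleGraph n) (↑S : Set (Fin n)) q = 0 :=
    RingHom.mem_ker.mp (PS_le_ker K hq')
  have hphim : phi K (SimpleGraph.cycleGraph n) (↑S : Set (Fin n)) m = 0 := by
    rw [map_add, hphiq, zero_add] at h0
    exact h0
  rw [NF_phi_inj K m hm hphim, add_zero]
  exact hq'

end Part8

/-! ### Part 10 and the colon computation -/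

lemma X_mul_X_eq_monomial {σ : Type} (a b : σ) :
    (X a : MvPolynomial σ K) * X b = monomial (Finsupp.single a 1 + Finsupp.single b 1) 1 := by
  rw [show (X a : MvPolynomial σ K) = monomial (Finsupp.single a 1) 1 from rfl,
    show (X b : MvPolynomial σ K) = monomial (Finsupp.single b 1) 1 from rfl,
    monomial_mul, one_mul]

lemma bedge_ne_zero {V : Type} {i j : V} (hne : i ≠ j) : bedge K i j ≠ 0 := by
  classical
  intro h0
  have hne2 : Finsupp.single (Sum.inl j : V ⊕ V) 1 + Finsupp.single (Sum.inr i : V ⊕ V) 1 ≠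
      Finsupp.single (Sum.inl i : V ⊕ V) 1 + Finsupp.single (Sum.inr j : V ⊕ V) 1 := by
    intro heq
    have h1 := congr_arg (fun f : (V ⊕ V) →₀ ℕ => f (Sum.inl i)) heq
    have hji : (Sum.inl j : V ⊕ V) ≠ Sum.inl i := by
      simp only [ne_eq, Sum.inl.injEq]; exact fun h => hne h.symm
    simp [Finsupp.single_apply, hji] at h1
  have hc : coeff (Finsupp.single (Sum.inl i : V ⊕ V) 1 + Finsupp.single (Sum.inr j : V ⊕ V) 1)
      (bedge K i j) = 1 := by
    rw [bedge, X_mul_X_eq_monomial, X_mul_X_eq_monomial, coeff_sub, coeff_monomial,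
      coeff_monomial, if_pos rfl, if_neg hne2]
    simp
  rw [h0, coeff_zero] at hc
  exact one_ne_zero hc.symm

/-- The second projection, mapping `z`-variables to `1`. -/
noncomputable def psi {V : Type} (G : SimpleGraph V) (S : Set V) :
    MvPolynomial (QVar G S) K →ₐ[K]
      MvPolynomial (Quotient (cSetoid G S) ⊕ Quotient (cSetoid G S)) K :=
  aeval (Sum.elim (fun q => X (Sum.inl q))
    (Sum.elim (fun q => X (Sum.inr q)) (fun _ => 1)))

section Final

variable {n : ℕ} [NeZero n] {S : Finset (Fin n)}

lemma psi_phi_bedge {a b : Fin n} (ha : a ∉ (↑S : Set (Fin n))) (hb : b ∉ (↑S : Set (Fin n))) :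
    psi K (SimpleGraph.cycleGraph n) (↑S : Set (Fin n))
        (phi K (SimpleGraph.cycleGraph n) (↑S : Set (Fin n)) (bedge K a b)) =
      bedge K (clsv n S a) (clsv n S b) := by
  simp only [bedge, map_sub, map_mul, phi, aeval_X, gmap, Sum.elim_inl, Sum.elim_inr,
    if_neg ha, if_neg hb, psi, clsv]
  ring

lemma psi_phi_X {v : Fin n} (hv : v ∉ (↑S : Set (Fin n))) :
    psi K (SimpleGraph.cycleGraph n) (↑S : Set (Fin n))
        (phi K (SimpleGraph.cycleGraph n) (↑S : Set (Fin n)) (X (Sum.inl v))) =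
      X (Sum.inl (clsv n S v)) := by
  simp only [phi, aeval_X, gmap, Sum.elim_inl, if_neg hv, psi, map_mul, aeval_X, Sum.elim_inr,
    Sum.elim_inl, mul_one, clsv]

lemma phi_f_ne_zero (hcut : IsCutSet (SimpleGraph.cycleGraph n) (↑S : Set (Fin n)))
    (D : Finset (Fin n)) (hD : ∀ v ∈ D, v ∉ (↑S : Set (Fin n))) :
    phi K (SimpleGraph.cycleGraph n) (↑S : Set (Fin n))
      ((∏ s ∈ S, bedge K (s - 1) (s + 1)) * ∏ v ∈ D, X (Sum.inl v)) ≠ 0 := by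
  intro h0
  have h1 : psi K (SimpleGraph.cycleGraph n) (↑S : Set (Fin n))
      (phi K (SimpleGraph.cycleGraph n) (↑S : Set (Fin n))
        ((∏ s ∈ S, bedge K (s - 1) (s + 1)) * ∏ v ∈ D, X (Sum.inl v))) = 0 := by
    rw [h0, map_zero]
  rw [map_mul, map_mul, map_prod, map_prod, map_prod, map_prod] at h1
  have h2 : (∏ s ∈ S, psi K (SimpleGraph.cycleGraph n) (↑S : Set (Fin n))
        (phi K (SimpleGraph.cycleGraph n) (↑S : Set (Fin n)) (bedge K (s - 1) (s + 1)))) *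
      (∏ v ∈ D, psi K (SimpleGraph.cycleGraph n) (↑S : Set (Fin n))
        (phi K (SimpleGraph.cycleGraph n) (↑S : Set (Fin n)) (X (Sum.inl v)))) ≠ 0 := by
    apply mul_ne_zero
    · apply Finset.prod_ne_zero_iff.mpr
      intro s hs
      have hind := cut_indep hcut hs
      rw [psi_phi_bedge K (by simpa using hind.2) (by simpa using hind.1)]
      apply bedge_ne_zero
      intro heq
      exact cut_not_rel hcut hs (Quotient.exact heq)
    · apply Finset.prod_ne_zero_iff.mpr
      intro v hv
      rw [psi_phi_X K (hD v hv)]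
      exact MvPolynomial.X_ne_zero (R := K) _
  exact h2 h1

lemma J_le_PS : beIdeal K (SimpleGraph.cycleGraph n) ≤
    PSIdeal K (SimpleGraph.cycleGraph n) (↑S : Set (Fin n)) := by
  rw [beIdeal, Ideal.span_le]
  rintro p ⟨i, j, hadj, rfl⟩
  by_cases hi : i ∈ S
  · have h1 : (X (Sum.inl i) : MvPolynomial (Fin n ⊕ Fin n) K) ∈
        PSIdeal K (SimpleGraph.cycleGraph n) (↑S : Set (Fin n)) :=
      Submodule.mem_sup_left (Ideal.subset_span (Or.inl ⟨i, by simpa using hi, rfl⟩))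
    have h2 : (X (Sum.inr i) : MvPolynomial (Fin n ⊕ Fin n) K) ∈
        PSIdeal K (SimpleGraph.cycleGraph n) (↑S : Set (Fin n)) :=
      Submodule.mem_sup_left (Ideal.subset_span (Or.inr ⟨i, by simpa using hi, rfl⟩))
    rw [SetLike.mem_coe, bedge]
    exact sub_mem (Ideal.mul_mem_right _ _ h1) (Ideal.mul_mem_left _ _ h2)
  · by_cases hj : j ∈ S
    · have h1 : (X (Sum.inl j) : MvPolynomial (Fin n ⊕ Fin n) K) ∈
          PSIdeal K (SimpleGraph.cycleGraph n) (↑S : Set (Fin n)) :=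
        Submodule.mem_sup_left (Ideal.subset_span (Or.inl ⟨j, by simpa using hj, rfl⟩))
      have h2 : (X (Sum.inr j) : MvPolynomial (Fin n ⊕ Fin n) K) ∈
          PSIdeal K (SimpleGraph.cycleGraph n) (↑S : Set (Fin n)) :=
        Submodule.mem_sup_left (Ideal.subset_span (Or.inr ⟨j, by simpa using hj, rfl⟩))
      rw [SetLike.mem_coe, bedge]
      exact sub_mem (Ideal.mul_mem_left _ _ h2) (Ideal.mul_mem_right _ _ h1)
    · rw [SetLike.mem_coe]
      refine Submodule.mem_sup_right (bedge_mem K ⟨hadj.ne, ?_⟩)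
      refine ⟨SimpleGraph.Walk.cons hadj SimpleGraph.Walk.nil, ?_⟩
      intro x hx
      simp only [SimpleGraph.Walk.support_cons, SimpleGraph.Walk.support_nil] at hx
      rcases List.mem_cons.mp hx with rfl | hx
      · simpa using hi
      · rw [List.mem_singleton.mp hx]
        simpa using hj

lemma xs_mul_mem (hcut : IsCutSet (SimpleGraph.cycleGraph n) (↑S : Set (Fin n)))
    {s : Fin n} (hs : s ∈ S) :
    (X (Sum.inl s) : MvPolynomial (Fin n ⊕ Fin n) K) * bedge K (s - 1) (s + 1) ∈
        beIdeal K (SimpleGraph.cycleGraph n) ∧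
      (X (Sum.inr s) : MvPolynomial (Fin n ⊕ Fin n) K) * bedge K (s - 1) (s + 1) ∈
        beIdeal K (SimpleGraph.cycleGraph n) := by
  have hind := cut_indep hcut hs
  have h2 : 2 ≤ n := two_le_of_ne (show s + 1 ≠ s from fun h => hind.1 (by rw [h]; exact hs))
  have e1 : bedge K s (s + 1) ∈ beIdeal K (SimpleGraph.cycleGraph n) :=
    bedge_mem K (cycle_adj_succ h2 s)
  have e2 : bedge K (s - 1) s ∈ beIdeal K (SimpleGraph.cycleGraph n) :=
    bedge_mem K (cycle_adj_pred h2 s)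
  constructor
  · rw [bedge_swap_x K (s - 1) s (s + 1)]
    exact add_mem (Ideal.mul_mem_left _ _ e1) (Ideal.mul_mem_left _ _ e2)
  · rw [bedge_swap_y K (s - 1) s (s + 1)]
    exact add_mem (Ideal.mul_mem_left _ _ e2) (Ideal.mul_mem_left _ _ e1)

lemma bedge_mul_f_mem {i j : Fin n}
    (hadj : (tildeG (SimpleGraph.cycleGraph n) (↑S : Set (Fin n))).Adj i j)
    (D : Finset (Fin n))
    (hD : ∀ v : Fin n, (v ∉ (↑S : Set (Fin n)) ∧
      Set.ncard {u : Fin n | u ∉ (↑S : Set (Fin n)) ∧ (SimpleGraph.cycleGraph n).Adj v u} = 2)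
      → v ∈ D) (B : MvPolynomial (Fin n ⊕ Fin n) K) :
    bedge K i j * (B * ∏ v ∈ D, X (Sum.inl v)) ∈ beIdeal K (SimpleGraph.cycleGraph n) := by
  classical
  obtain ⟨hne, w, hw⟩ := hadj
  set p := w.bypass with hp
  have hpath : p.IsPath := w.bypass_isPath
  have hsub : ∀ x ∈ p.support, x ∉ (↑S : Set (Fin n)) :=
    fun x hx => hw x (w.support_bypass_subset hx)
  set L := p.support.tail.dropLast with hL
  have hnodupsup : p.support.Nodup := hpath.support_nodup
  have hconssup : p.support = i :: p.support.tail := p.support_eq_cons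
  have htailnodup : p.support.tail.Nodup := by
    rw [hconssup] at hnodupsup
    exact (List.nodup_cons.mp hnodupsup).2
  have hnodup : L.Nodup := htailnodup.sublist (List.dropLast_sublist _)
  -- interior vertices are in D
  have hLD : ∀ v ∈ L, v ∈ D := by
    intro v hv
    have hvtail : v ∈ p.support.tail := List.dropLast_subset _ hv
    have hvsup : v ∈ p.support := List.mem_of_mem_tail hvtail
    have hvS : v ∉ (↑S : Set (Fin n)) := hsub v hvsup
    have hvi : v ≠ i := by
      intro h; subst h
      rw [hconssup] at hnodupsup
      exact (List.nodup_cons.mp hnodupsup).1 hvtail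
    have hvj : v ≠ j := by
      intro h; subst h
      have htne : p.support.tail ≠ [] := by
        intro h0
        rw [hL, h0] at hv
        simp at hv
      have hlast : p.support.tail.getLast htne = v :=
        (List.getLast_tail htne).trans p.getLast_support
      have hdecomp : p.support.tail.dropLast ++ [v] = p.support.tail := by
        conv_rhs => rw [← List.dropLast_append_getLast htne]
        rw [hlast]
      rw [← hdecomp] at htailnodup
      have hdisj := List.disjoint_of_nodup_append htailnodup
      exact hdisj (by rw [hL] at hv; exact hv) (List.mem_singleton_self v)
    -- extract the two neighbours along the path
    have hq := p.takeUntil v hvsup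
    have hr := p.dropUntil v hvsup
    have hspec := p.take_spec hvsup
    -- previous vertex
    obtain ⟨u, hadju, humem⟩ : ∃ u, (SimpleGraph.cycleGraph n).Adj v u ∧
        u ∈ (p.takeUntil v hvsup).support := by
      obtain ⟨b, hadj, w', hq2⟩ :=
        SimpleGraph.Walk.exists_eq_cons_of_ne hvi (p.takeUntil v hvsup).reverse
      refine ⟨b, hadj, ?_⟩
      have hmem : b ∈ (p.takeUntil v hvsup).reverse.support := by
        rw [hq2, SimpleGraph.Walk.support_cons]
        exact List.mem_cons_of_mem _ w'.start_mem_support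
      rw [SimpleGraph.Walk.support_reverse] at hmem
      exact List.mem_reverse.mp hmem
    -- next vertex
    obtain ⟨u', hadju', humem'⟩ : ∃ u', (SimpleGraph.cycleGraph n).Adj v u' ∧
        u' ∈ (p.dropUntil v hvsup).support.tail := by
      obtain ⟨b, hadj, w', hr2⟩ :=
        SimpleGraph.Walk.exists_eq_cons_of_ne hvj (p.dropUntil v hvsup)
      refine ⟨b, hadj, ?_⟩
      rw [hr2, SimpleGraph.Walk.support_cons, List.tail_cons]
      exact w'.start_mem_support
    have hdisj2 : ∀ x ∈ (p.takeUntil v hvsup).support,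
        ∀ y ∈ (p.dropUntil v hvsup).support.tail, x ≠ y := by
      have hsupeq : p.support = (p.takeUntil v hvsup).support ++
          (p.dropUntil v hvsup).support.tail := by
        conv_lhs => rw [← hspec]
        exact SimpleGraph.Walk.support_append _ _
      rw [hsupeq] at hnodupsup
      have := List.disjoint_of_nodup_append hnodupsup
      intro x hx y hy hxy
      exact this hx (hxy ▸ hy)
    have huu' : u ≠ u' := hdisj2 u humem u' humem'
    have huS : u ∉ (↑S : Set (Fin n)) :=
      hsub u (p.support_takeUntil_subset hvsup humem)
    have huS' : u' ∉ (↑S : Set (Fin n)) :=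
      hsub u' (p.support_dropUntil_subset hvsup (List.mem_of_mem_tail humem'))
    apply hD v
    refine ⟨hvS, ?_⟩
    have hset : {u'' : Fin n | u'' ∉ (↑S : Set (Fin n)) ∧ (SimpleGraph.cycleGraph n).Adj v u''} =
        {u, u'} := by
      ext x
      simp only [Set.mem_setOf_eq, Set.mem_insert_iff, Set.mem_singleton_iff]
      constructor
      · rintro ⟨hxS, hxadj⟩
        rcases cycle_adj_classify hxadj with hx | hx <;>
          rcases cycle_adj_classify hadju with hu1 | hu1 <;>
            rcases cycle_adj_classify hadju' with hu2 | hu2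
        · exact Or.inl (hx.trans hu1.symm)
        · exact Or.inl (hx.trans hu1.symm)
        · exact Or.inr (hx.trans hu2.symm)
        · exact absurd (hu1.trans hu2.symm) huu'
        · exact absurd (hu1.trans hu2.symm) huu'
        · exact Or.inr (hx.trans hu2.symm)
        · exact Or.inl (hx.trans hu1.symm)
        · exact Or.inl (hx.trans hu1.symm)
      · rintro (rfl | rfl)
        · exact ⟨huS, hadju⟩
        · exact ⟨huS', hadju'⟩
    rw [hset]
    exact Set.ncard_pair huu'
  -- split the product over D
  have hsubF : L.toFinset ⊆ D := fun v hv => hLD v (List.mem_toFinset.mp hv)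
  have hsplit : (∏ v ∈ D, (X (Sum.inl v) : MvPolynomial (Fin n ⊕ Fin n) K)) =
      (L.map (fun v => (X (Sum.inl v) : MvPolynomial (Fin n ⊕ Fin n) K))).prod *
        ∏ v ∈ D \ L.toFinset, X (Sum.inl v) := by
    rw [← List.prod_toFinset _ hnodup, ← Finset.prod_sdiff hsubF, mul_comm]
  rw [hsplit]
  have hmem := walk_prod_bedge_mem K p
  rw [show bedge K i j * (B * ((L.map (fun v => (X (Sum.inl v) :
        MvPolynomial (Fin n ⊕ Fin n) K))).prod * ∏ v ∈ D \ L.toFinset, X (Sum.inl v))) =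
      ((L.map (fun v => (X (Sum.inl v) : MvPolynomial (Fin n ⊕ Fin n) K))).prod * bedge K i j) *
        (B * ∏ v ∈ D \ L.toFinset, X (Sum.inl v)) by ring]
  exact Ideal.mul_mem_right _ _ hmem

end Final

theorem statement_11 {n : ℕ} [NeZero n] (S : Finset (Fin n))
    (hcut : IsCutSet (SimpleGraph.cycleGraph n) (↑S : Set (Fin n))) :
    Submodule.colon (beIdeal K (SimpleGraph.cycleGraph n))
      (Ideal.span {(∏ s ∈ S, bedge K (s - 1) (s + 1)) *
        ∏ v ∈ (Set.toFinite {v : Fin n | v ∉ (↑S : Set (Fin n)) ∧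
            Set.ncard {u : Fin n | u ∉ (↑S : Set (Fin n)) ∧
              (SimpleGraph.cycleGraph n).Adj v u} = 2}).toFinset,
          (X (Sum.inl v) : MvPolynomial (Fin n ⊕ Fin n) K)}) =
      PSIdeal K (SimpleGraph.cycleGraph n) (↑S : Set (Fin n)) := by
  classical
  set D := (Set.toFinite {v : Fin n | v ∉ (↑S : Set (Fin n)) ∧
      Set.ncard {u : Fin n | u ∉ (↑S : Set (Fin n)) ∧
        (SimpleGraph.cycleGraph n).Adj v u} = 2}).toFinset with hD
  have hDmem : ∀ v : Fin n, v ∈ D ↔ (v ∉ (↑S : Set (Fin n)) ∧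
      Set.ncard {u : Fin n | u ∉ (↑S : Set (Fin n)) ∧
        (SimpleGraph.cycleGraph n).Adj v u} = 2) := by
    intro v
    rw [hD, Set.Finite.mem_toFinset, Set.mem_setOf_eq]
  set f := (∏ s ∈ S, bedge K (s - 1) (s + 1)) *
    ∏ v ∈ D, (X (Sum.inl v) : MvPolynomial (Fin n ⊕ Fin n) K) with hf
  apply le_antisymm
  · intro g hg
    have hgf : g * f ∈ beIdeal K (SimpleGraph.cycleGraph n) := by
      have := Submodule.mem_colon_span_singleton.mp hg
      simpa [smul_eq_mul] using this
    have hker : phi K (SimpleGraph.cycleGraph n) (↑S : Set (Fin n)) (g * f) = 0 :=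
      RingHom.mem_ker.mp (PS_le_ker K (J_le_PS K hgf))
    rw [map_mul] at hker
    rcases mul_eq_zero.mp hker with h | h
    · exact ker_le_PS K g h
    · exact absurd h (phi_f_ne_zero K hcut D (fun v hv => ((hDmem v).mp hv).1))
  · rw [PSIdeal]
    apply sup_le
    · rw [Ideal.span_le]
      rintro q hq
      rw [SetLike.mem_coe, ← Ideal.submodule_span_eq, Submodule.mem_colon_span_singleton]
      rcases hq with ⟨s, hsS, rfl⟩ | ⟨s, hsS, rfl⟩
      · have hsS' : s ∈ S := hsS
        have hmem : ((X (Sum.inl s) : MvPolynomial (Fin n ⊕ Fin n) K) *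
            bedge K (s - 1) (s + 1)) *
            ((∏ s' ∈ S.erase s, bedge K (s' - 1) (s' + 1)) * ∏ v ∈ D, X (Sum.inl v)) ∈
            beIdeal K (SimpleGraph.cycleGraph n) :=
          Ideal.mul_mem_right _ _ (xs_mul_mem K hcut hsS').1
        have heq : (X (Sum.inl s) : MvPolynomial (Fin n ⊕ Fin n) K) *
            ((∏ s'' ∈ S, bedge K (s'' - 1) (s'' + 1)) * ∏ v ∈ D, X (Sum.inl v)) =
            ((X (Sum.inl s) : MvPolynomial (Fin n ⊕ Fin n) K) * bedge K (s - 1) (s + 1)) *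
            ((∏ s' ∈ S.erase s, bedge K (s' - 1) (s' + 1)) * ∏ v ∈ D, X (Sum.inl v)) := by
          rw [← Finset.mul_prod_erase S _ hsS']; ring
        show (X (Sum.inl s) : MvPolynomial (Fin n ⊕ Fin n) K) *
            ((∏ s'' ∈ S, bedge K (s'' - 1) (s'' + 1)) * ∏ v ∈ D, X (Sum.inl v)) ∈
            beIdeal K (SimpleGraph.cycleGraph n)
        rw [heq]; exact hmem
      · have hsS' : s ∈ S := hsS
        have hmem : ((X (Sum.inr s) : MvPolynomial (Fin n ⊕ Fin n) K) *
            bedge K (s - 1) (s + 1)) *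
            ((∏ s' ∈ S.erase s, bedge K (s' - 1) (s' + 1)) * ∏ v ∈ D, X (Sum.inl v)) ∈
            beIdeal K (SimpleGraph.cycleGraph n) :=
          Ideal.mul_mem_right _ _ (xs_mul_mem K hcut hsS').2
        have heq : (X (Sum.inr s) : MvPolynomial (Fin n ⊕ Fin n) K) *
            ((∏ s'' ∈ S, bedge K (s'' - 1) (s'' + 1)) * ∏ v ∈ D, X (Sum.inl v)) =
            ((X (Sum.inr s) : MvPolynomial (Fin n ⊕ Fin n) K) * bedge K (s - 1) (s + 1)) *
            ((∏ s' ∈ S.erase s, bedge K (s' - 1) (s' + 1)) * ∏ v ∈ D, X (Sum.inl v)) := by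
          rw [← Finset.mul_prod_erase S _ hsS']; ring
        show (X (Sum.inr s) : MvPolynomial (Fin n ⊕ Fin n) K) *
            ((∏ s'' ∈ S, bedge K (s'' - 1) (s'' + 1)) * ∏ v ∈ D, X (Sum.inl v)) ∈
            beIdeal K (SimpleGraph.cycleGraph n)
        rw [heq]; exact hmem
    · rw [beIdeal, Ideal.span_le]
      rintro q ⟨i, j, hadj, rfl⟩
      rw [SetLike.mem_coe, ← Ideal.submodule_span_eq, Submodule.mem_colon_span_singleton]
      show bedge K i j *
          ((∏ s'' ∈ S, bedge K (s'' - 1) (s'' + 1)) * ∏ v ∈ D, X (Sum.inl v)) ∈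
          beIdeal K (SimpleGraph.cycleGraph n)
      exact bedge_mul_f_mem K hadj D (fun v hv => (hDmem v).mpr hv) _

end

end Paper
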